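/- For every 6×6 real orthogonal matrix R with det R = 1, there exist 4×4 real orthogonal matrices R₁, R₂, R₃, each with determinant 1, such that R = (I₂ ⊕ R₁)·(R₂ ⊕ I₂)·(I₂ ⊕ R₃), where I₂ ⊕ M denotes the 6×6 block-diagonal matrix with the 2×2 identity in the top-left block and M in the bottom-right block, and M ⊕ I₂ the block-diagonal matrix with M in the top-left and the 2×2 identity in the bottom-right. -/

import Mathlib

/-- The 6×6 block-diagonal matrix `I₂ ⊕ M` with the 2×2 identity in the top-left
block and the 4×4 matrix `M` in the bottom-right block. -/
noncomputable def padBottomRight (M : Matrix (Fin 4) (Fin 4) ℝ) : Matrix (Fin 6) (Fin 6) ℝ :=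
  (Matrix.reindex (finSumFinEquiv.trans (finCongr (by norm_num)))
      (finSumFinEquiv.trans (finCongr (by norm_num))))
    (Matrix.fromBlocks (1 : Matrix (Fin 2) (Fin 2) ℝ) 0 0 M)

/-- The 6×6 block-diagonal matrix `M ⊕ I₂` with the 4×4 matrix `M` in the top-left
block and the 2×2 identity in the bottom-right block. -/
noncomputable def padTopLeft (M : Matrix (Fin 4) (Fin 4) ℝ) : Matrix (Fin 6) (Fin 6) ℝ :=
  (Matrix.reindex (finSumFinEquiv.trans (finCongr (by norm_num)))
      (finSumFinEquiv.trans (finCongr (by norm_num))))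
    (Matrix.fromBlocks M 0 0 (1 : Matrix (Fin 2) (Fin 2) ℝ))

open Matrix

namespace SO6Euler

def lo2 : Fin 2 → Fin 6 := fun i => ⟨i.val, by omega⟩
def hi4 : Fin 4 → Fin 6 := fun j => ⟨j.val + 2, by omega⟩
def lo4 : Fin 4 → Fin 6 := fun j => ⟨j.val, by omega⟩
def hi2 : Fin 2 → Fin 6 := fun i => ⟨i.val + 4, by omega⟩

lemma sigma24_inl (i : Fin 2) :
    (finSumFinEquiv.trans (finCongr (by norm_num : 2+4=6))) (Sum.inl i) = lo2 i := by
  simp [finSumFinEquiv, lo2, Fin.ext_iff]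
lemma sigma24_inr (j : Fin 4) :
    (finSumFinEquiv.trans (finCongr (by norm_num : 2+4=6))) (Sum.inr j) = hi4 j := by
  simp [finSumFinEquiv, hi4, Fin.ext_iff]; omega
lemma sigma42_inl (i : Fin 4) :
    (finSumFinEquiv.trans (finCongr (by norm_num : 4+2=6))) (Sum.inl i) = lo4 i := by
  simp [finSumFinEquiv, lo4, Fin.ext_iff]
lemma sigma42_inr (j : Fin 2) :
    (finSumFinEquiv.trans (finCongr (by norm_num : 4+2=6))) (Sum.inr j) = hi2 j := by
  simp [finSumFinEquiv, hi2, Fin.ext_iff]; omega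

lemma pBR_ll (M) (i i' : Fin 2) : padBottomRight M (lo2 i) (lo2 i') = if i = i' then 1 else 0 := by
  rw [padBottomRight, ← sigma24_inl i, ← sigma24_inl i']
  simp [Matrix.one_apply]
lemma pBR_lh (M) (i : Fin 2) (j : Fin 4) : padBottomRight M (lo2 i) (hi4 j) = 0 := by
  rw [padBottomRight, ← sigma24_inl i, ← sigma24_inr j]; simp
lemma pBR_hl (M) (j : Fin 4) (i : Fin 2) : padBottomRight M (hi4 j) (lo2 i) = 0 := by
  rw [padBottomRight, ← sigma24_inl i, ← sigma24_inr j]; simp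
lemma pBR_hh (M) (j j' : Fin 4) : padBottomRight M (hi4 j) (hi4 j') = M j j' := by
  rw [padBottomRight, ← sigma24_inr j, ← sigma24_inr j']; simp

lemma pTL_ll (M) (i i' : Fin 4) : padTopLeft M (lo4 i) (lo4 i') = M i i' := by
  rw [padTopLeft, ← sigma42_inl i, ← sigma42_inl i']; simp
lemma pTL_lh (M) (i : Fin 4) (j : Fin 2) : padTopLeft M (lo4 i) (hi2 j) = 0 := by
  rw [padTopLeft, ← sigma42_inl i, ← sigma42_inr j]; simp
lemma pTL_hl (M) (j : Fin 2) (i : Fin 4) : padTopLeft M (hi2 j) (lo4 i) = 0 := by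
  rw [padTopLeft, ← sigma42_inl i, ← sigma42_inr j]; simp
lemma pTL_hh (M) (j j' : Fin 2) : padTopLeft M (hi2 j) (hi2 j') = if j = j' then 1 else 0 := by
  rw [padTopLeft, ← sigma42_inr j, ← sigma42_inr j']; simp [Matrix.one_apply]

lemma sum_split (f : Fin 6 → ℝ) : ∑ k, f k = (∑ i : Fin 2, f (lo2 i)) + (∑ j : Fin 4, f (hi4 j)) := by
  rw [← Equiv.sum_comp (finSumFinEquiv.trans (finCongr (by norm_num : 2+4=6))) f,
    Fintype.sum_sum_type]
  exact congrArg₂ (· + ·) (Finset.sum_congr rfl fun i _ => by rw [sigma24_inl])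
    (Finset.sum_congr rfl fun j _ => by rw [sigma24_inr])

lemma pBR_mul (M N) : padBottomRight (M * N) = padBottomRight M * padBottomRight N := by
  simp only [padBottomRight, reindex_apply, Matrix.submatrix_mul_equiv]
  rw [Matrix.fromBlocks_multiply]
  simp
lemma pBR_one : padBottomRight 1 = 1 := by
  simp [padBottomRight, Matrix.fromBlocks_one]
lemma pBR_transpose (M) : padBottomRight Mᵀ = (padBottomRight M)ᵀ := by
  simp [padBottomRight, Matrix.transpose_submatrix, Matrix.fromBlocks_transpose]
lemma pBR_det (M) : (padBottomRight M).det = M.det := by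
  simp [padBottomRight, Matrix.det_fromBlocks_zero₂₁]
lemma pTL_mul (M N) : padTopLeft (M * N) = padTopLeft M * padTopLeft N := by
  simp only [padTopLeft, reindex_apply, Matrix.submatrix_mul_equiv]
  rw [Matrix.fromBlocks_multiply]
  simp
lemma pTL_one : padTopLeft 1 = 1 := by
  simp [padTopLeft, Matrix.fromBlocks_one]
lemma pTL_transpose (M) : padTopLeft Mᵀ = (padTopLeft M)ᵀ := by
  simp [padTopLeft, Matrix.transpose_submatrix, Matrix.fromBlocks_transpose]
lemma pTL_det (M) : (padTopLeft M).det = M.det := by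
  simp [padTopLeft, Matrix.det_fromBlocks_zero₂₁]

lemma pTL_inj : Function.Injective padTopLeft := by
  intro M N h
  ext i j
  have := congrFun (congrFun h (lo4 i)) (lo4 j)
  rwa [pTL_ll, pTL_ll] at this

lemma star_eq_transpose {n : Type*} [Fintype n] [DecidableEq n] (X : Matrix n n ℝ) :
    star X = Xᵀ := by
  ext i j; simp [Matrix.star_apply]

lemma transpose_mem {n : Type*} [Fintype n] [DecidableEq n] {A : Matrix n n ℝ}
    (h : A ∈ Matrix.orthogonalGroup n ℝ) : Aᵀ ∈ Matrix.orthogonalGroup n ℝ := by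
  rw [Matrix.mem_orthogonalGroup_iff, Matrix.transpose_transpose]
  have := (Matrix.mem_orthogonalGroup_iff' _ _).mp h
  exact this

lemma pBR_mem {M : Matrix (Fin 4) (Fin 4) ℝ} (h : M ∈ Matrix.orthogonalGroup (Fin 4) ℝ) :
    padBottomRight M ∈ Matrix.orthogonalGroup (Fin 6) ℝ := by
  rw [Matrix.mem_orthogonalGroup_iff', ← pBR_transpose, ← pBR_mul]
  have := (Matrix.mem_orthogonalGroup_iff' _ _).mp h
  rw [this, pBR_one]

noncomputable def toE (x : Fin 4 → ℝ) : EuclideanSpace ℝ (Fin 4) :=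
  (WithLp.equiv 2 (Fin 4 → ℝ)).symm x

lemma toE_apply (x : Fin 4 → ℝ) (i : Fin 4) : toE x i = x i := rfl

lemma inner_toE (x y : Fin 4 → ℝ) : inner ℝ (toE x) (toE y) = x ⬝ᵥ y := by
  rw [PiLp.inner_apply]
  simp [toE_apply, dotProduct, mul_comm]

lemma inner_eq_dot (x y : EuclideanSpace ℝ (Fin 4)) :
    inner ℝ x y = (fun i => x i) ⬝ᵥ (fun i => y i) := by
  rw [PiLp.inner_apply]
  simp [dotProduct, mul_comm]

/-- An orthonormal pair in ℝ⁴ extends to an SO(4) matrix with the pair as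
columns 2 and 3. -/
lemma exists_so4_cols (v w : Fin 4 → ℝ) (hv : v ⬝ᵥ v = 1) (hw : w ⬝ᵥ w = 1)
    (hvw : v ⬝ᵥ w = 0) :
    ∃ Q : Matrix (Fin 4) (Fin 4) ℝ, Q ∈ Matrix.orthogonalGroup (Fin 4) ℝ ∧ Q.det = 1 ∧
      (∀ i, Q i 2 = v i) ∧ (∀ i, Q i 3 = w i) := by
  classical
  set E := EuclideanSpace ℝ (Fin 4)
  let f : Fin 4 → E := ![0, 0, toE v, toE w]
  have hwv : w ⬝ᵥ v = 0 := by rwa [dotProduct_comm]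
  have horth : Orthonormal ℝ (({2, 3} : Set (Fin 4)).restrict f) := by
    rw [orthonormal_iff_ite]
    rintro ⟨i, hi⟩ ⟨j, hj⟩
    simp only [Set.mem_insert_iff, Set.mem_singleton_iff] at hi hj
    rcases hi with rfl | rfl <;> rcases hj with rfl | rfl <;>
      simp [f, Subtype.ext_iff, -inner_self_eq_norm_sq_to_K, Set.restrict] <;> rw [inner_toE] <;> assumption
  obtain ⟨b, hb⟩ := Orthonormal.exists_orthonormalBasis_extension_of_card_eq
    (by simp [E] : Module.finrank ℝ E = Fintype.card (Fin 4)) horth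
  have hb2 : b 2 = toE v := by simpa [f] using hb 2 (by simp)
  have hb3 : b 3 = toE w := by simpa [f] using hb 3 (by simp)
  let Q₀ : Matrix (Fin 4) (Fin 4) ℝ := fun i j => b j i
  have hQ₀orth : Q₀ᵀ * Q₀ = 1 := by
    ext i j
    have h := (orthonormal_iff_ite.mp b.orthonormal) i j
    rw [PiLp.inner_apply] at h
    simp only [Matrix.mul_apply, Matrix.transpose_apply, Matrix.one_apply]
    simpa [Q₀, mul_comm] using h
  have hmem : Q₀ ∈ Matrix.orthogonalGroup (Fin 4) ℝ := by
    rw [Matrix.mem_orthogonalGroup_iff']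
    simpa using hQ₀orth
  have hdetsq : Q₀.det * Q₀.det = 1 := by
    have := congrArg Matrix.det hQ₀orth
    rwa [Matrix.det_mul, Matrix.det_transpose, Matrix.det_one] at this
  by_cases hdet : Q₀.det = 1
  · exact ⟨Q₀, hmem, hdet, fun i => by simp [Q₀, hb2, toE_apply],
      fun i => by simp [Q₀, hb3, toE_apply]⟩
  · have hdet' : Q₀.det = -1 := by
      rcases mul_self_eq_one_iff.mp hdetsq with h | h
      · exact absurd h hdet
      · exact h
    set d : Fin 4 → ℝ := ![-1, 1, 1, 1] with hd
    set D : Matrix (Fin 4) (Fin 4) ℝ := Matrix.diagonal d with hD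
    have hDD : D * D = 1 := by
      rw [hD, Matrix.diagonal_mul_diagonal]
      rw [show (fun i => d i * d i) = fun _ => (1 : ℝ) from funext fun i => by
        fin_cases i <;> norm_num [hd]]
      exact Matrix.diagonal_one
    have hstarD : star D = D := by
      rw [hD, Matrix.star_eq_conjTranspose, Matrix.diagonal_conjTranspose]
      congr 1
    have hDmem : D ∈ Matrix.orthogonalGroup (Fin 4) ℝ := by
      rw [Matrix.mem_orthogonalGroup_iff, ← star_eq_transpose, hstarD]; exact hDD
    have hDdet : D.det = -1 := by
      rw [hD, Matrix.det_diagonal, Fin.prod_univ_four]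
      norm_num [hd, Matrix.cons_val_two, Matrix.cons_val_three]
    refine ⟨Q₀ * D, mul_mem hmem hDmem, ?_, fun i => ?_, fun i => ?_⟩
    · rw [Matrix.det_mul, hdet', hDdet]; norm_num
    · rw [Matrix.mul_diagonal]
      simp [Q₀, hb2, toE_apply, hd]
    · rw [Matrix.mul_diagonal]
      simp [Q₀, hb3, toE_apply, hd]

/-- The kernel of a 2×4 real matrix contains an orthonormal pair. -/
lemma exists_ker_pair (A : Matrix (Fin 2) (Fin 4) ℝ) :
    ∃ u u' : Fin 4 → ℝ, A.mulVec u = 0 ∧ A.mulVec u' = 0 ∧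
      u ⬝ᵥ u = 1 ∧ u' ⬝ᵥ u' = 1 ∧ u ⬝ᵥ u' = 0 := by
  classical
  set E := EuclideanSpace ℝ (Fin 4)
  let T : E →ₗ[ℝ] (Fin 2 → ℝ) :=
    A.mulVecLin ∘ₗ (WithLp.linearEquiv 2 ℝ (Fin 4 → ℝ)).toLinearMap
  set K := LinearMap.ker T with hK
  have hrange : Module.finrank ℝ (LinearMap.range T) ≤ 2 := by
    simpa using Submodule.finrank_le (LinearMap.range T)
  have hrk : 2 ≤ Module.finrank ℝ K := by
    have h := LinearMap.finrank_range_add_finrank_ker T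
    have hE : Module.finrank ℝ E = 4 := by simp [E]
    rw [← hK] at h
    omega
  let b := stdOrthonormalBasis ℝ K
  let x0 : K := b ⟨0, by omega⟩
  let x1 : K := b ⟨1, by omega⟩
  have horth := orthonormal_iff_ite.mp b.orthonormal
  have h00 : inner ℝ x0 x0 = 1 := by simpa [x0] using horth ⟨0, by omega⟩ ⟨0, by omega⟩
  have h11 : inner ℝ x1 x1 = 1 := by simpa [x1] using horth ⟨1, by omega⟩ ⟨1, by omega⟩
  have h01 : inner ℝ x0 x1 = 0 := by
    have := horth ⟨0, by omega⟩ ⟨1, by omega⟩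
    simpa [x0, x1, Fin.ext_iff] using this
  refine ⟨fun i => (x0 : E) i, fun i => (x1 : E) i, ?_, ?_, ?_, ?_, ?_⟩
  · exact LinearMap.mem_ker.mp x0.2
  · exact LinearMap.mem_ker.mp x1.2
  · rw [← inner_eq_dot]; rw [← Submodule.coe_inner]; exact h00
  · rw [← inner_eq_dot]; rw [← Submodule.coe_inner]; exact h11
  · rw [← inner_eq_dot]; rw [← Submodule.coe_inner]; exact h01

lemma dot_mulVec_orth {R : Matrix (Fin 6) (Fin 6) ℝ} (h : Rᵀ * R = 1) (x x' : Fin 6 → ℝ) :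
    (R *ᵥ x) ⬝ᵥ (R *ᵥ x') = x ⬝ᵥ x' := by
  rw [Matrix.dotProduct_mulVec, Matrix.vecMul_mulVec, h, Matrix.vecMul_one]

def extv (x : Fin 4 → ℝ) : Fin 6 → ℝ := fun k =>
  if h : (k : ℕ) < 2 then 0 else x ⟨(k : ℕ) - 2, by omega⟩

lemma extv_lo (x : Fin 4 → ℝ) (i : Fin 2) : extv x (lo2 i) = 0 := by
  simp [extv, lo2, i.isLt]

lemma extv_hi (x : Fin 4 → ℝ) (j : Fin 4) : extv x (hi4 j) = x j := by
  rw [extv, dif_neg (by simp [hi4])]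
  congr 1

lemma sum_sq_zero (f : Fin 6 → ℝ) (hsum : ∑ c, f c * f c = 1) {r : Fin 6} (hfr : f r = 1)
    {c : Fin 6} (hcr : c ≠ r) : f c = 0 := by
  have key := Finset.add_sum_erase Finset.univ (fun x => f x * f x) (Finset.mem_univ r)
  have h1 : ∑ x ∈ Finset.univ.erase r, f x * f x = 0 := by
    have h2 : f r * f r + ∑ x ∈ Finset.univ.erase r, f x * f x = 1 := key.trans hsum
    rw [hfr] at h2; linarith
  have := (Finset.sum_eq_zero_iff_of_nonneg (fun x _ => mul_self_nonneg (f x))).mp h1 c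
    (Finset.mem_erase.mpr ⟨hcr, Finset.mem_univ c⟩)
  exact mul_self_eq_zero.mp this

lemma fin6_cases24 (r : Fin 6) : (∃ i, r = lo2 i) ∨ (∃ j, r = hi4 j) := by
  by_cases h : (r : ℕ) < 2
  · exact Or.inl ⟨⟨r, h⟩, by simp [lo2]⟩
  · exact Or.inr ⟨⟨(r : ℕ) - 2, by omega⟩, by simp [hi4, Fin.ext_iff]; omega⟩

lemma fin6_cases42 (r : Fin 6) : (∃ i, r = lo4 i) ∨ (∃ a, r = hi2 a) := by
  by_cases h : (r : ℕ) < 4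
  · exact Or.inl ⟨⟨r, h⟩, by simp [lo4]⟩
  · exact Or.inr ⟨⟨(r : ℕ) - 4, by omega⟩, by simp [hi2, Fin.ext_iff]; omega⟩

lemma pBR_mul_lo (P : Matrix (Fin 4) (Fin 4) ℝ) (X : Matrix (Fin 6) (Fin 6) ℝ)
    (i : Fin 2) (c : Fin 6) : (padBottomRight P * X) (lo2 i) c = X (lo2 i) c := by
  rw [Matrix.mul_apply, sum_split (fun k => padBottomRight P (lo2 i) k * X k c)]
  simp [pBR_ll, pBR_lh, ite_mul, Finset.sum_ite_eq]

lemma pBR_mul_hi (P : Matrix (Fin 4) (Fin 4) ℝ) (X : Matrix (Fin 6) (Fin 6) ℝ)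
    (j : Fin 4) (c : Fin 6) :
    (padBottomRight P * X) (hi4 j) c = ∑ j', P j j' * X (hi4 j') c := by
  rw [Matrix.mul_apply, sum_split (fun k => padBottomRight P (hi4 j) k * X k c)]
  simp [pBR_hl, pBR_hh]

lemma hi4_inj : Function.Injective hi4 := by
  intro a b h
  have := congrArg Fin.val h
  simp only [hi4] at this
  exact Fin.ext (by omega)

lemma fin2_eq (a : Fin 2) : a = 0 ∨ a = 1 := by
  fin_cases a <;> simp

end SO6Euler

open SO6Euler

/-- Euler-type decomposition of SO(6): every special orthogonal 6×6 matrix `R` can be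
written as `R = (I₂ ⊕ R₁)(R₂ ⊕ I₂)(I₂ ⊕ R₃)` with `R₁, R₂, R₃ ∈ SO(4)`. -/
theorem so6_euler_decomposition (R : Matrix (Fin 6) (Fin 6) ℝ)
    (hR : R ∈ Matrix.orthogonalGroup (Fin 6) ℝ) (hdet : R.det = 1) :
    ∃ R₁ R₂ R₃ : Matrix (Fin 4) (Fin 4) ℝ,
      R₁ ∈ Matrix.orthogonalGroup (Fin 4) ℝ ∧ R₁.det = 1 ∧
      R₂ ∈ Matrix.orthogonalGroup (Fin 4) ℝ ∧ R₂.det = 1 ∧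
      R₃ ∈ Matrix.orthogonalGroup (Fin 4) ℝ ∧ R₃.det = 1 ∧
      R = padBottomRight R₁ * padTopLeft R₂ * padBottomRight R₃ := by
  classical
  have hRtR : Rᵀ * R = 1 := by
    have := (Matrix.mem_orthogonalGroup_iff' _ _).mp hR
    exact this
  -- an orthonormal pair in the kernel of the top-right 2×4 block
  set A : Matrix (Fin 2) (Fin 4) ℝ := fun i j => R (lo2 i) (hi4 j) with hA
  obtain ⟨u, u', hu0, hu'0, huu, hu'u', huu'⟩ := exists_ker_pair A
  obtain ⟨Q₃, hQ₃mem, hQ₃det, hQ₃c2, hQ₃c3⟩ := exists_so4_cols u u' huu hu'u' huu'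
  set y : Fin 6 → ℝ := fun c => ∑ j, R c (hi4 j) * u j with hy
  set y' : Fin 6 → ℝ := fun c => ∑ j, R c (hi4 j) * u' j with hy'
  have hylo : ∀ i, y (lo2 i) = 0 := by
    intro i
    have := congrFun hu0 i
    simpa [Matrix.mulVec, dotProduct, hA, hy] using this
  have hy'lo : ∀ i, y' (lo2 i) = 0 := by
    intro i
    have := congrFun hu'0 i
    simpa [Matrix.mulVec, dotProduct, hA, hy'] using this
  have hyR : ∀ x : Fin 4 → ℝ, (fun c => ∑ j, R c (hi4 j) * x j) = R *ᵥ extv x := by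
    intro x
    funext c
    rw [show (R *ᵥ extv x) c = ∑ k, R c k * extv x k from by
      simp [Matrix.mulVec, dotProduct]]
    rw [sum_split (fun k => R c k * extv x k)]
    simp [extv_lo, extv_hi]
  have hextdot : ∀ x x' : Fin 4 → ℝ, extv x ⬝ᵥ extv x' = x ⬝ᵥ x' := by
    intro x x'
    rw [dotProduct, sum_split (fun k => extv x k * extv x' k)]
    simp [extv_lo, extv_hi, dotProduct]
  have hydot : ∀ (a b : Fin 4 → ℝ),
      (fun c => ∑ j, R c (hi4 j) * a j) ⬝ᵥ (fun c => ∑ j, R c (hi4 j) * b j) = a ⬝ᵥ b := by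
    intro a b
    rw [hyR a, hyR b, dot_mulVec_orth hRtR, hextdot]
  -- the images, restricted to the last four coordinates
  set v : Fin 4 → ℝ := fun j => y (hi4 j) with hv
  set v' : Fin 4 → ℝ := fun j => y' (hi4 j) with hv'
  have hsplitdot : ∀ (a b : Fin 6 → ℝ), (∀ i, a (lo2 i) = 0) →
      a ⬝ᵥ b = (fun j => a (hi4 j)) ⬝ᵥ (fun j => b (hi4 j)) := by
    intro a b ha
    rw [dotProduct, sum_split (fun k => a k * b k)]
    simp [ha, dotProduct]
  have hvv : v ⬝ᵥ v = 1 := by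
    rw [hv, ← hsplitdot y y hylo, hy, hydot]; exact huu
  have hv'v' : v' ⬝ᵥ v' = 1 := by
    rw [hv', ← hsplitdot y' y' hy'lo, hy', hydot]; exact hu'u'
  have hvv' : v ⬝ᵥ v' = 0 := by
    rw [hv, hv', ← hsplitdot y y' hylo, hy, hy', hydot]; exact huu'
  obtain ⟨Q₁, hQ₁mem, hQ₁det, hQ₁c2, hQ₁c3⟩ := exists_so4_cols v v' hvv hv'v' hvv'
  have hQ₁tQ₁ : Q₁ᵀ * Q₁ = 1 := by
    have := (Matrix.mem_orthogonalGroup_iff' _ _).mp hQ₁mem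
    exact this
  -- the middle matrix
  set B : Matrix (Fin 6) (Fin 6) ℝ :=
    padBottomRight Q₁ᵀ * (R * padBottomRight Q₃) with hB
  have hRp2 : ∀ c, (R * padBottomRight Q₃) c (hi4 2) = y c := by
    intro c
    rw [Matrix.mul_apply, sum_split (fun k => R c k * padBottomRight Q₃ k (hi4 2))]
    simp [pBR_lh, pBR_hh, hQ₃c2, hy]
  have hRp3 : ∀ c, (R * padBottomRight Q₃) c (hi4 3) = y' c := by
    intro c
    rw [Matrix.mul_apply, sum_split (fun k => R c k * padBottomRight Q₃ k (hi4 3))]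
    simp [pBR_lh, pBR_hh, hQ₃c3, hy']
  have hBcol2 : ∀ r, B r (hi4 2) = if r = hi4 2 then 1 else 0 := by
    intro r
    rcases fin6_cases24 r with ⟨i, rfl⟩ | ⟨j, rfl⟩
    · rw [hB, pBR_mul_lo, hRp2, hylo]
      rw [if_neg (fun hcon => by
        have := congrArg Fin.val hcon
        simp only [lo2, hi4] at this
        omega)]
    · rw [hB, pBR_mul_hi]
      have hc2 : ∀ i : Fin 4, Q₁ i 2 = y (hi4 i) := hQ₁c2
      have : ∀ j', (Q₁ᵀ) j j' * (R * padBottomRight Q₃) (hi4 j') (hi4 2)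
          = Q₁ j' j * Q₁ j' 2 := by
        intro j'
        rw [Matrix.transpose_apply, hRp2, ← hc2 j']
      rw [Finset.sum_congr rfl fun j' _ => this j']
      have h12 := congrFun (congrFun hQ₁tQ₁ j) 2
      rw [Matrix.mul_apply] at h12
      simp only [Matrix.transpose_apply] at h12
      rw [h12, Matrix.one_apply]
      rcases eq_or_ne j 2 with rfl | hj
      · rw [if_pos rfl, if_pos rfl]
      · rw [if_neg hj, if_neg fun hcon => hj (hi4_inj hcon)]
  have hBcol3 : ∀ r, B r (hi4 3) = if r = hi4 3 then 1 else 0 := by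
    intro r
    rcases fin6_cases24 r with ⟨i, rfl⟩ | ⟨j, rfl⟩
    · rw [hB, pBR_mul_lo, hRp3, hy'lo]
      rw [if_neg (fun hcon => by
        have := congrArg Fin.val hcon
        simp only [lo2, hi4] at this
        omega)]
    · rw [hB, pBR_mul_hi]
      have hc3 : ∀ i : Fin 4, Q₁ i 3 = y' (hi4 i) := hQ₁c3
      have : ∀ j', (Q₁ᵀ) j j' * (R * padBottomRight Q₃) (hi4 j') (hi4 3)
          = Q₁ j' j * Q₁ j' 3 := by
        intro j'
        rw [Matrix.transpose_apply, hRp3, ← hc3 j']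
      rw [Finset.sum_congr rfl fun j' _ => this j']
      have h13 := congrFun (congrFun hQ₁tQ₁ j) 3
      rw [Matrix.mul_apply] at h13
      simp only [Matrix.transpose_apply] at h13
      rw [h13, Matrix.one_apply]
      rcases eq_or_ne j 3 with rfl | hj
      · rw [if_pos rfl, if_pos rfl]
      · rw [if_neg hj, if_neg fun hcon => hj (hi4_inj hcon)]
  have hBmem : B ∈ Matrix.orthogonalGroup (Fin 6) ℝ := by
    exact mul_mem (pBR_mem (transpose_mem hQ₁mem)) (mul_mem hR (pBR_mem hQ₃mem))
  have hBBt : B * Bᵀ = 1 := by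
    have := (Matrix.mem_orthogonalGroup_iff _ _).mp hBmem
    exact this
  have hBdet : B.det = 1 := by
    rw [hB, Matrix.det_mul, Matrix.det_mul, pBR_det, pBR_det,
      Matrix.det_transpose, hQ₁det, hQ₃det, hdet]
    ring
  -- rows 4 and 5 of B
  have hrow : ∀ (m : Fin 4), B (hi4 m) (hi4 m) = 1 →
      ∀ c, c ≠ hi4 m → B (hi4 m) c = 0 := by
    intro m hm c hc
    have hsum : ∑ c, B (hi4 m) c * B (hi4 m) c = 1 := by
      have := congrFun (congrFun hBBt (hi4 m)) (hi4 m)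
      rw [Matrix.mul_apply] at this
      simpa [Matrix.transpose_apply, Matrix.one_apply] using this
    exact sum_sq_zero _ hsum hm hc
  have hrow2 := hrow 2 (by rw [hBcol2, if_pos rfl])
  have hrow3 := hrow 3 (by rw [hBcol3, if_pos rfl])
  -- B has the padTopLeft form
  set R₂ : Matrix (Fin 4) (Fin 4) ℝ := fun i j => B (lo4 i) (lo4 j) with hR₂
  have h20 : hi2 0 = hi4 2 := by decide
  have h21 : hi2 1 = hi4 3 := by decide
  have hBeq : B = padTopLeft R₂ := by
    ext r c
    rcases fin6_cases42 r with ⟨i, rfl⟩ | ⟨a, rfl⟩ <;>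
      rcases fin6_cases42 c with ⟨j, rfl⟩ | ⟨b, rfl⟩
    · rw [pTL_ll, hR₂]
    · rw [pTL_lh]
      have hne1 : lo4 i ≠ hi4 2 := fun hcon => by
        have := congrArg Fin.val hcon; simp only [lo4, hi4] at this; omega
      have hne2 : lo4 i ≠ hi4 3 := fun hcon => by
        have := congrArg Fin.val hcon; simp only [lo4, hi4] at this; omega
      rcases fin2_eq b with rfl | rfl
      · rw [h20, hBcol2, if_neg hne1]
      · rw [h21, hBcol3, if_neg hne2]
    · rw [pTL_hl]
      have hne1 : lo4 j ≠ hi4 2 := fun hcon => by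
        have := congrArg Fin.val hcon; simp only [lo4, hi4] at this; omega
      have hne2 : lo4 j ≠ hi4 3 := fun hcon => by
        have := congrArg Fin.val hcon; simp only [lo4, hi4] at this; omega
      rcases fin2_eq a with rfl | rfl
      · rw [h20]; exact hrow2 _ hne1
      · rw [h21]; exact hrow3 _ hne2
    · rw [pTL_hh]
      rcases fin2_eq a with rfl | rfl <;> rcases fin2_eq b with rfl | rfl
      · rw [h20, hBcol2, if_pos rfl, if_pos rfl]
      · rw [h20, h21, hBcol3, if_neg (by decide), if_neg (by decide)]
      · rw [h20, h21, hBcol2, if_neg (by decide), if_neg (by decide)]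
      · rw [h21, hBcol3, if_pos rfl, if_pos rfl]
  have hR₂mem : R₂ ∈ Matrix.orthogonalGroup (Fin 4) ℝ := by
    rw [Matrix.mem_orthogonalGroup_iff']
    have hBo : Bᵀ * B = 1 := by
      have := (Matrix.mem_orthogonalGroup_iff' _ _).mp hBmem
      exact this
    rw [hBeq, ← pTL_transpose, ← pTL_mul, ← pTL_one] at hBo
    exact pTL_inj hBo
  have hR₂det : R₂.det = 1 := by
    have := hBdet
    rw [hBeq, pTL_det] at this
    exact this
  -- invert the side factors
  have hQ₁Q₁t : Q₁ * Q₁ᵀ = 1 := by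
    have := (Matrix.mem_orthogonalGroup_iff _ _).mp hQ₁mem
    exact this
  have hQ₃Q₃t : Q₃ * Q₃ᵀ = 1 := by
    have := (Matrix.mem_orthogonalGroup_iff _ _).mp hQ₃mem
    exact this
  have h1 : padBottomRight Q₁ * padBottomRight Q₁ᵀ = 1 := by
    rw [← pBR_mul, hQ₁Q₁t, pBR_one]
  have h2 : padBottomRight Q₃ * padBottomRight Q₃ᵀ = 1 := by
    rw [← pBR_mul, hQ₃Q₃t, pBR_one]
  refine ⟨Q₁, R₂, Q₃ᵀ, hQ₁mem, hQ₁det, hR₂mem, hR₂det, transpose_mem hQ₃mem,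
    by rw [Matrix.det_transpose]; exact hQ₃det, ?_⟩
  rw [← hBeq, hB]
  calc R = (padBottomRight Q₁ * padBottomRight Q₁ᵀ) * R *
        (padBottomRight Q₃ * padBottomRight Q₃ᵀ) := by rw [h1, h2, one_mul, mul_one]
    _ = padBottomRight Q₁ * (padBottomRight Q₁ᵀ * (R * padBottomRight Q₃)) *
        padBottomRight Q₃ᵀ := by noncomm_ring
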